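/- Let γ be a real number, let β ≥ 1 and k ≥ 0 be integers, and let W_γ(x) = (1−x)^γ on [0,1). Then for every x ∈ [0,1): P_{β+1}( W_γ⁻¹ · Q_β((1−·)^k) )(x) + Q_β( W_γ⁻¹ · P_β((1−·)^k) )(x) = β(β+γ+1−k)(β−k)(2k−γ) · (1−x)^{k−γ−1} + β·( k(k−1)(β+γ+2−k) + (β−k)(k−γ)(k−γ−1) ) · (1−x)^{k−γ−2}, where the powers of 1−x are real powers of the positive number 1−x. -/

import Mathlib

open Real Filter Set


/-- `(P_β g)(x) = (1−β)g′(x) + x·g″(x)`. -/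
noncomputable def Pd (β : ℕ) (g : ℝ → ℝ) (x : ℝ) : ℝ :=
  ((1 : ℝ) - β) * deriv g x + x * deriv (deriv g) x

/-- `(Q_β g)(x) = β(β·g(x) + (1−x)g′(x))`. -/
noncomputable def Qd (β : ℕ) (g : ℝ → ℝ) (x : ℝ) : ℝ :=
  (β : ℝ) * ((β : ℝ) * g x + (1 - x) * deriv g x)


private lemma d_pow (k : ℕ) :
    deriv (fun t : ℝ => (1 - t) ^ k) = fun t => -((k : ℝ) * (1 - t) ^ (k - 1)) := by
  funext t
  have h1 : HasDerivAt (fun t : ℝ => 1 - t) (-1) t := by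
    simpa using (hasDerivAt_id t).const_sub 1
  have h2 := h1.pow k
  rw [(show HasDerivAt (fun t : ℝ => (1 - t) ^ k) _ t from h2).deriv]; ring

private lemma d_pow2 (k : ℕ) :
    deriv (fun t : ℝ => -((k : ℝ) * (1 - t) ^ (k - 1))) =
      fun t => (k : ℝ) * ((k : ℝ) - 1) * (1 - t) ^ (k - 2) := by
  match k with
  | 0 => funext t; norm_num
  | 1 => funext t; norm_num
  | (n+2) =>
    funext t
    have h1 : HasDerivAt (fun t : ℝ => 1 - t) (-1) t := by
      simpa using (hasDerivAt_id t).const_sub 1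
    have h2 := ((h1.pow (n+1)).const_mul (((n : ℝ) + 2))).neg
    have e1 : n + 2 - 1 = n + 1 := rfl
    have e2 : n + 2 - 2 = n := rfl
    rw [e1, e2]
    have : deriv (fun t : ℝ => -(((n : ℝ) + 2) * (1 - t) ^ (n + 1))) t
        = -(((n : ℝ) + 2) * (((n : ℝ) + 1) * (1 - t) ^ (n + 1 - 1) * (-1))) := by
      rw [(show HasDerivAt (fun t : ℝ => -(((n : ℝ) + 2) * (1 - t) ^ (n + 1))) _ t from h2).deriv]; push_cast; ring
    push_cast
    rw [this]
    simp only [Nat.add_sub_cancel]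
    ring

private lemma hQ (γ : ℝ) (β k : ℕ) {y : ℝ} (hy : y < 1) :
    (1 - y) ^ (-γ) * Qd β (fun t => (1 - t) ^ k) y
      = ((β : ℝ) * ((β : ℝ) - (k : ℝ))) * (1 - y) ^ ((k : ℝ) - γ) := by
  have hpos : (0:ℝ) < 1 - y := by linarith
  unfold Qd
  rw [d_pow]
  rw [show (k:ℝ) - γ = (k:ℝ) + (-γ) by ring, Real.rpow_add hpos, Real.rpow_natCast]
  match k with
  | 0 => norm_num; ring
  | n+1 => simp only [Nat.add_sub_cancel]; push_cast; ring

private lemma hP (γ : ℝ) (β k : ℕ) {y : ℝ} (hy : y < 1) :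
    (1 - y) ^ (-γ) * Pd β (fun t => (1 - t) ^ k) y
      = ((k : ℝ) * ((β : ℝ) - (k : ℝ))) * (1 - y) ^ ((k : ℝ) - γ - 1)
        + ((k : ℝ) * ((k : ℝ) - 1)) * (1 - y) ^ ((k : ℝ) - γ - 2) := by
  have hpos : (0:ℝ) < 1 - y := by linarith
  unfold Pd
  rw [d_pow, d_pow2]
  match k with
  | 0 => norm_num
  | 1 => rw [show (Nat.cast 1 : ℝ) - γ - 1 = -γ by push_cast; ring]; norm_num; ring
  | n+2 =>
    have e1 : n + 2 - 1 = n + 1 := rfl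
    have e2 : n + 2 - 2 = n := rfl
    rw [e1, e2]
    rw [show ((n+2 : ℕ):ℝ) - γ - 1 = ((n+1 : ℕ):ℝ) + (-γ) by push_cast; ring,
        show ((n+2 : ℕ):ℝ) - γ - 2 = ((n : ℕ):ℝ) + (-γ) by push_cast; ring,
        Real.rpow_add hpos, Real.rpow_add hpos, Real.rpow_natCast, Real.rpow_natCast]
    push_cast
    ring

private lemma hd' {x : ℝ} (hx : x < 1) (c e : ℝ) :
    HasDerivAt (fun y : ℝ => c * (1 - y) ^ e) (-(c * e * (1 - x) ^ (e - 1))) x := by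
  have h1 : HasDerivAt (fun y : ℝ => 1 - y) (-1) x := by
    simpa using (hasDerivAt_id x).const_sub 1
  have h2 : HasDerivAt (fun u : ℝ => u ^ e) (e * (1 - x) ^ (e - 1)) (1 - x) :=
    Real.hasDerivAt_rpow_const (Or.inl (by linarith))
  have h3 := (h2.comp x h1).const_mul c
  refine (show HasDerivAt (fun y : ℝ => c * (1 - y) ^ e) _ x from h3).congr_deriv ?_
  ring

theorem stmt10 (γ : ℝ) (β k : ℕ) (hβ : 1 ≤ β) (x : ℝ) (hx : x ∈ Set.Ico (0 : ℝ) 1) :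
    Pd (β + 1) (fun y => (1 - y) ^ (-γ) * Qd β (fun t => (1 - t) ^ k) y) x +
      Qd β (fun y => (1 - y) ^ (-γ) * Pd β (fun t => (1 - t) ^ k) y) x =
    (β : ℝ) * ((β : ℝ) + γ + 1 - (k : ℝ)) * ((β : ℝ) - (k : ℝ)) * (2 * (k : ℝ) - γ) *
        (1 - x) ^ ((k : ℝ) - γ - 1) +
      (β : ℝ) * ((k : ℝ) * ((k : ℝ) - 1) * ((β : ℝ) + γ + 2 - (k : ℝ)) +
          ((β : ℝ) - (k : ℝ)) * ((k : ℝ) - γ) * ((k : ℝ) - γ - 1)) *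
        (1 - x) ^ ((k : ℝ) - γ - 2) := by
  obtain ⟨hx0, hx1⟩ := hx
  have hpos : (0:ℝ) < 1 - x := by linarith
  have hmem : Set.Iio (1:ℝ) ∈ nhds x := Iio_mem_nhds hx1
  have hF1 : (fun y => (1 - y) ^ (-γ) * Qd β (fun t => (1 - t) ^ k) y)
      =ᶠ[nhds x] (fun y => ((β:ℝ) * ((β:ℝ) - (k:ℝ))) * (1 - y) ^ ((k:ℝ) - γ)) := by
    filter_upwards [hmem] with y hy
    exact hQ γ β k hy
  have hF2 : (fun y => (1 - y) ^ (-γ) * Pd β (fun t => (1 - t) ^ k) y)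
      =ᶠ[nhds x] (fun y => ((k:ℝ) * ((β:ℝ) - (k:ℝ))) * (1 - y) ^ ((k:ℝ) - γ - 1)
        + ((k:ℝ) * ((k:ℝ) - 1)) * (1 - y) ^ ((k:ℝ) - γ - 2)) := by
    filter_upwards [hmem] with y hy
    exact hP γ β k hy
  have dF1 : deriv (fun y => (1 - y) ^ (-γ) * Qd β (fun t => (1 - t) ^ k) y) x
      = -(((β:ℝ) * ((β:ℝ) - (k:ℝ))) * ((k:ℝ) - γ) * (1 - x) ^ ((k:ℝ) - γ - 1)) := by
    rw [hF1.deriv_eq]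
    exact (hd' hx1 _ _).deriv
  have hF1' : deriv (fun y => (1 - y) ^ (-γ) * Qd β (fun t => (1 - t) ^ k) y)
      =ᶠ[nhds x] (fun y => (-(((β:ℝ) * ((β:ℝ) - (k:ℝ))) * ((k:ℝ) - γ)))
          * (1 - y) ^ ((k:ℝ) - γ - 1)) := by
    refine hF1.deriv.trans ?_
    filter_upwards [hmem] with y hy
    rw [(hd' hy (((β:ℝ) * ((β:ℝ) - (k:ℝ)))) ((k:ℝ) - γ)).deriv]
    ring
  have ddF1 : deriv (deriv (fun y => (1 - y) ^ (-γ) * Qd β (fun t => (1 - t) ^ k) y)) x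
      = -((-(((β:ℝ) * ((β:ℝ) - (k:ℝ))) * ((k:ℝ) - γ))) * ((k:ℝ) - γ - 1)
          * (1 - x) ^ ((k:ℝ) - γ - 1 - 1)) := by
    rw [hF1'.deriv_eq]
    exact (hd' hx1 _ _).deriv
  have dF2 : deriv (fun y => (1 - y) ^ (-γ) * Pd β (fun t => (1 - t) ^ k) y) x
      = -(((k:ℝ) * ((β:ℝ) - (k:ℝ))) * ((k:ℝ) - γ - 1) * (1 - x) ^ ((k:ℝ) - γ - 1 - 1))
        + -(((k:ℝ) * ((k:ℝ) - 1)) * ((k:ℝ) - γ - 2) * (1 - x) ^ ((k:ℝ) - γ - 2 - 1)) := by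
    rw [hF2.deriv_eq]
    exact ((hd' hx1 _ _).add (hd' hx1 _ _)).deriv
  have pd_def : ∀ (m : ℕ) (g : ℝ → ℝ) (z : ℝ),
      Pd m g z = ((1:ℝ) - m) * deriv g z + z * deriv (deriv g) z := fun _ _ _ => rfl
  have qd_def : ∀ (m : ℕ) (g : ℝ → ℝ) (z : ℝ),
      Qd m g z = (m:ℝ) * ((m:ℝ) * g z + (1 - z) * deriv g z) := fun _ _ _ => rfl
  rw [pd_def, qd_def, dF1, ddF1, dF2, hP γ β k hx1]
  have e1 : (k:ℝ) - γ - 1 - 1 = (k:ℝ) - γ - 2 := by ring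
  have e2 : (k:ℝ) - γ - 2 - 1 = (k:ℝ) - γ - 3 := by ring
  rw [e1, e2]
  have h1 : (1-x) ^ ((k:ℝ)-γ-1) = (1-x) * (1-x) ^ ((k:ℝ)-γ-2) := by
    rw [show (k:ℝ)-γ-1 = 1 + ((k:ℝ)-γ-2) by ring, Real.rpow_add hpos, Real.rpow_one]
  have h2 : (1-x) ^ ((k:ℝ)-γ-2) = (1-x) * (1-x) ^ ((k:ℝ)-γ-3) := by
    rw [show (k:ℝ)-γ-2 = 1 + ((k:ℝ)-γ-3) by ring, Real.rpow_add hpos, Real.rpow_one]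
  rw [h1, h2]
  push_cast
  ring
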